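/- Every virtually solvable group G admits a finite normal series 1 = G₀ ⊴ G₁ ⊴ ... ⊴ Gₙ = G (each Gᵢ normal in G) such that each quotient G_{i+1}/G_i is either locally finite or abelian, and no two consecutive quotients are both locally finite. -/

import Mathlib

/-- A group is locally finite if every finitely generated subgroup is finite. -/
def IsLocallyFiniteGroup (G : Type*) [Group G] : Prop :=
  ∀ S : Set G, S.Finite → (Subgroup.closure S : Set G).Finite

/-- The quotient `H/N` (for `N ≤ H` subgroups of an ambient group) is locally finite:
every finite subset of `H` generates a subgroup meeting only finitely many cosets of `N`. -/
def QuotientIsLocallyFinite {G : Type*} [Group G] (N H : Subgroup G) : Prop :=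
  ∀ S : Set G, S.Finite → S ⊆ (H : Set G) →
    ∃ T : Set G, T.Finite ∧ ∀ g ∈ Subgroup.closure S, ∃ t ∈ T, t⁻¹ * g ∈ N

/-- The quotient `H/N` is abelian: commutators of elements of `H` lie in `N`. -/
def QuotientIsAbelian {G : Type*} [Group G] (N H : Subgroup G) : Prop :=
  ∀ a ∈ H, ∀ b ∈ H, a * b * a⁻¹ * b⁻¹ ∈ N

/-- Transitivity (extension closure) for the transversal form of local finiteness. -/
lemma QLF_trans' {G : Type*} [Group G] {N H K : Subgroup G}
    (h1 : QuotientIsLocallyFinite N H) (h2 : QuotientIsLocallyFinite H K) :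
    QuotientIsLocallyFinite N K := by
  classical
  intro S hS hSK
  obtain ⟨T, hTfin, hT⟩ := h2 S hS hSK
  set P : Subgroup G := Subgroup.closure S with hP
  -- refine the transversal T into one contained in P
  let pick : G → G := fun t => if h : ∃ g, g ∈ P ∧ t⁻¹ * g ∈ H then h.choose else 1
  have hpick : ∀ g ∈ P, ∃ t₀ ∈ pick '' T, t₀ ∈ P ∧ t₀⁻¹ * g ∈ H := by
    intro g hg
    obtain ⟨t, htT, htH⟩ := hT g hg
    have hex : ∃ g', g' ∈ P ∧ t⁻¹ * g' ∈ H := ⟨g, hg, htH⟩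
    refine ⟨pick t, Set.mem_image_of_mem _ htT, ?_, ?_⟩
    · simp only [pick, dif_pos hex]; exact hex.choose_spec.1
    · have h1' : t⁻¹ * pick t ∈ H := by
        simp only [pick, dif_pos hex]; exact hex.choose_spec.2
      have : (t⁻¹ * pick t)⁻¹ * (t⁻¹ * g) ∈ H := H.mul_mem (H.inv_mem h1') htH
      simpa [mul_assoc] using this
  set T₀ : Set G := pick '' T with hT₀
  have hT₀fin : T₀.Finite := hTfin.image _
  -- the subgroup generated by S is finitely generated
  haveI hPfg : Group.FG ↥P :=
    (Group.fg_iff_subgroup_fg P).mpr ((Subgroup.fg_iff P).mpr ⟨S, rfl, hS⟩)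
  -- H ⊓ P has finite index in P
  set H' : Subgroup ↥P := H.subgroupOf P with hH'
  have hfin : Finite (↥P ⧸ H') := by
    set T₁ : Set ↥P := (Subtype.val) ⁻¹' T₀ with hT₁
    have hT₁fin : T₁.Finite := hT₀fin.preimage (Subtype.val_injective.injOn)
    have hsurj : Function.Surjective (fun x : T₁ => (QuotientGroup.mk x.1 : ↥P ⧸ H')) := by
      rintro q
      obtain ⟨g, rfl⟩ := QuotientGroup.mk_surjective q
      obtain ⟨t₀, ht₀T, ht₀P, ht₀H⟩ := hpick (g : G) g.2
      refine ⟨⟨⟨t₀, ht₀P⟩, ht₀T⟩, ?_⟩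
      refine (QuotientGroup.eq).mpr ?_
      simpa [hH', Subgroup.mem_subgroupOf] using ht₀H
    haveI : Finite T₁ := hT₁fin
    exact Finite.of_surjective _ hsurj
  haveI : H'.FiniteIndex := @Subgroup.finiteIndex_of_finite_quotient _ _ H' hfin
  have hH'fg : H'.FG := (Group.fg_iff_subgroup_fg H').mp (Subgroup.fg_of_index_ne_zero H')
  obtain ⟨S₂', hS₂'cl, hS₂'fin⟩ := (Subgroup.fg_iff H').mp hH'fg
  set S₂ : Set G := Subtype.val '' S₂' with hS₂
  have hS₂cl : Subgroup.closure S₂ = H ⊓ P := by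
    have : (Subtype.val '' S₂' : Set G) = ⇑P.subtype '' S₂' := rfl
    rw [hS₂, this, ← MonoidHom.map_closure P.subtype, hS₂'cl, hH', Subgroup.subgroupOf_map_subtype]
  have hS₂H : S₂ ⊆ (H : Set G) := by
    intro x hx
    have : x ∈ Subgroup.closure S₂ := Subgroup.subset_closure hx
    rw [hS₂cl] at this
    exact this.1
  obtain ⟨T₂, hT₂fin, hT₂⟩ := h1 S₂ (hS₂'fin.image _) hS₂H
  refine ⟨Set.image2 (· * ·) T₀ T₂, hT₀fin.image2 _ hT₂fin, ?_⟩
  intro g hg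
  obtain ⟨t₀, ht₀T, ht₀P, ht₀H⟩ := hpick g hg
  have hmem : t₀⁻¹ * g ∈ Subgroup.closure S₂ := by
    rw [hS₂cl]
    exact ⟨ht₀H, P.mul_mem (P.inv_mem ht₀P) hg⟩
  obtain ⟨t₂, ht₂T, ht₂N⟩ := hT₂ _ hmem
  refine ⟨t₀ * t₂, Set.mem_image2_of_mem ht₀T ht₂T, ?_⟩
  simpa [mul_assoc] using ht₂N

/-- A finite-index subgroup gives a locally finite quotient. -/
lemma QLF_of_finiteIndex {G : Type*} [Group G] (N H : Subgroup G) (hfi : N.FiniteIndex) :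
    QuotientIsLocallyFinite N H := by
  intro S hS hSH
  haveI := hfi
  haveI : Finite (G ⧸ N) := Subgroup.finite_quotient_of_finiteIndex
  refine ⟨Set.range (Quotient.out : G ⧸ N → G), Set.finite_range _, ?_⟩
  intro g _
  refine ⟨(QuotientGroup.mk g : G ⧸ N).out, Set.mem_range_self _, ?_⟩
  have : (QuotientGroup.mk ((QuotientGroup.mk g : G ⧸ N).out) : G ⧸ N) = QuotientGroup.mk g :=
    Quotient.out_eq _
  exact (QuotientGroup.eq).mp this

/-- Cleanup step: delete middle terms of a normal series until no two consecutive
quotients are both locally finite. -/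
lemma chain_fix {G : Type*} [Group G] :
    ∀ n : ℕ, ∀ s : ℕ → Subgroup G,
      s 0 = ⊥ → s n = ⊤ → (∀ i, (s i).Normal) → (∀ i, i < n → s i ≤ s (i + 1)) →
      (∀ i, i < n → QuotientIsLocallyFinite (s i) (s (i + 1)) ∨
        QuotientIsAbelian (s i) (s (i + 1))) →
      ∃ (n' : ℕ) (s' : ℕ → Subgroup G),
        s' 0 = ⊥ ∧ s' n' = ⊤ ∧
        (∀ i, (s' i).Normal) ∧
        (∀ i, i < n' → s' i ≤ s' (i + 1)) ∧
        (∀ i, i < n' →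
          QuotientIsLocallyFinite (s' i) (s' (i + 1)) ∨ QuotientIsAbelian (s' i) (s' (i + 1))) ∧
        (∀ i, i + 1 < n' →
          ¬(QuotientIsLocallyFinite (s' i) (s' (i + 1)) ∧
            QuotientIsLocallyFinite (s' (i + 1)) (s' (i + 2)))) := by
  intro n
  induction n using Nat.strong_induction_on with
  | _ n ih =>
    intro s h0 hn hnorm hmono hquot
    by_cases hbad : ∃ i, i + 1 < n ∧ QuotientIsLocallyFinite (s i) (s (i + 1)) ∧
        QuotientIsLocallyFinite (s (i + 1)) (s (i + 2))
    · obtain ⟨i, hi, hq1, hq2⟩ := hbad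
      set s' : ℕ → Subgroup G := fun j => if j ≤ i then s j else s (j + 1) with hs'
      have e1 : ∀ j, j ≤ i → s' j = s j := fun j hj => if_pos hj
      have e2 : ∀ j, i < j → s' j = s (j + 1) := fun j hj => if_neg (by omega)
      refine ih (n - 1) (by omega) s' ?_ ?_ ?_ ?_ ?_
      · rw [e1 0 (by omega), h0]
      · rw [e2 (n - 1) (by omega)]
        have : n - 1 + 1 = n := by omega
        rw [this, hn]
      · intro j
        by_cases hj : j ≤ i
        · rw [e1 j hj]; exact hnorm j
        · rw [e2 j (by omega)]; exact hnorm (j + 1)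
      · intro j hj
        rcases lt_trichotomy j i with h | h | h
        · rw [e1 j (by omega), e1 (j + 1) (by omega)]; exact hmono j (by omega)
        · subst h
          rw [e1 j (le_refl _), e2 (j + 1) (by omega)]
          exact le_trans (hmono j (by omega)) (hmono (j + 1) (by omega))
        · rw [e2 j (by omega), e2 (j + 1) (by omega)]
          exact hmono (j + 1) (by omega)
      · intro j hj
        rcases lt_trichotomy j i with h | h | h
        · rw [e1 j (by omega), e1 (j + 1) (by omega)]; exact hquot j (by omega)
        · subst h
          rw [e1 j (le_refl _), e2 (j + 1) (by omega)]
          exact Or.inl (QLF_trans' hq1 hq2)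
        · rw [e2 j (by omega), e2 (j + 1) (by omega)]
          exact hquot (j + 1) (by omega)
    · push_neg at hbad
      exact ⟨n, s, h0, hn, hnorm, hmono, hquot, fun i hi h => hbad i hi h.1 h.2⟩

/-- Every virtually solvable group admits a finite normal series
`1 = G₀ ⊴ G₁ ⊴ ... ⊴ Gₙ = G` (each `Gᵢ` normal in `G`) whose successive quotients are
locally finite or abelian, with no two consecutive quotients both locally finite. -/
theorem virtually_solvable_normal_series
    (G : Type*) [Group G]
    (hvs : ∃ H : Subgroup G, H.FiniteIndex ∧ IsSolvable H) :
    ∃ (n : ℕ) (s : ℕ → Subgroup G),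
      s 0 = ⊥ ∧ s n = ⊤ ∧
      (∀ i, (s i).Normal) ∧
      (∀ i, i < n → s i ≤ s (i + 1)) ∧
      (∀ i, i < n →
        QuotientIsLocallyFinite (s i) (s (i + 1)) ∨ QuotientIsAbelian (s i) (s (i + 1))) ∧
      (∀ i, i + 1 < n →
        ¬(QuotientIsLocallyFinite (s i) (s (i + 1)) ∧
          QuotientIsLocallyFinite (s (i + 1)) (s (i + 2)))) := by
  obtain ⟨Hs, hfi, hsol⟩ := hvs
  haveI := hfi
  set N : Subgroup G := Hs.normalCore with hN
  haveI hNnorm : N.Normal := Subgroup.normalCore_normal Hs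
  haveI hNfi : N.FiniteIndex := Subgroup.finiteIndex_normalCore Hs
  haveI hNsol : IsSolvable ↥N :=
    haveI : Group.IsSolvable Hs := hsol; solvable_of_solvable_injective (Subgroup.inclusion_injective (Hs.normalCore_le))
  set D : ℕ → Subgroup G := fun i => (derivedSeries ↥N i).map N.subtype with hD
  have hD0 : D 0 = N := by
    simp only [hD, derivedSeries_zero, ← MonoidHom.range_eq_map, Subgroup.range_subtype]
  have hDsucc : ∀ i, D (i + 1) = ⁅D i, D i⁆ := by
    intro i
    simp only [hD, derivedSeries_succ, Subgroup.map_commutator]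
  have hDnormal : ∀ i, (D i).Normal := by
    intro i
    induction i with
    | zero => rw [hD0]; exact hNnorm
    | succ i ihn => rw [hDsucc i]; exact @Subgroup.commutator_normal G _ (D i) (D i) ihn ihn
  have hDle : ∀ i, D (i + 1) ≤ D i := by
    intro i
    rw [hDsucc i]
    exact @Subgroup.commutator_le_left G _ (D i) (D i) (hDnormal i)
  obtain ⟨k, hk⟩ := hNsol.solvable
  have hDk : D k = ⊥ := by rw [hD]; simp only [hk, Subgroup.map_bot]
  set s : ℕ → Subgroup G := fun i => if i ≤ k then D (k - i) else ⊤ with hs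
  have hsk : ∀ i ≤ k, s i = D (k - i) := fun i hi => if_pos hi
  have hstop : ∀ i, k < i → s i = ⊤ := fun i hi => if_neg (by omega)
  refine chain_fix (k + 1) s ?_ ?_ ?_ ?_ ?_
  · rw [hsk 0 (by omega), Nat.sub_zero, hDk]
  · rw [hstop (k + 1) (by omega)]
  · intro i
    by_cases hi : i ≤ k
    · rw [hsk i hi]; exact hDnormal _
    · rw [hstop i (by omega)]; infer_instance
  · intro i hi
    by_cases hik : i < k
    · rw [hsk i (by omega), hsk (i + 1) (by omega)]
      have : k - i = (k - (i + 1)) + 1 := by omega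
      rw [this]
      exact hDle _
    · have : i = k := by omega
      subst this
      rw [hstop (i + 1) (by omega)]
      exact le_top
  · intro i hi
    by_cases hik : i < k
    · refine Or.inr ?_
      rw [hsk i (by omega), hsk (i + 1) (by omega)]
      intro a ha b hb
      have : k - i = (k - (i + 1)) + 1 := by omega
      rw [this, hDsucc]
      exact Subgroup.commutator_mem_commutator ha hb
    · have : i = k := by omega
      subst this
      rw [hsk i (le_refl _), Nat.sub_self, hD0, hstop (i + 1) (by omega)]
      exact Or.inl (QLF_of_finiteIndex N ⊤ hNfi)
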